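/- Energy estimate for the mean-zero local problem (Lemma 4.1 of the paper): let ω be a bounded domain with Poincaré constant C_P as above, let f ∈ L²(ω), and suppose C_P^{1/2} H k < 1. If u ∈ H₀¹(ω) satisfies −(Δ + k²)u = f − avg_ω f weakly (where avg_ω f is the mean of f over ω), then ‖∇u‖_{L²(ω)} ≤ C_e C_P^{1/2} H ‖f‖_{L²(ω)}, with C_e = (1 − C_P (Hk)²)^{-1}. -/

import Mathlib

open MeasureTheory
open scoped RealInnerProductSpace

/-- Energy estimate for the mean-zero local problem (Lemma 4.1): if `u ∈ H₀¹(ω)` (with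
gradient `gu`, belonging to the test class `T` representing `H₀¹(ω)`) weakly solves
`-(Δ + k²)u = f - avg_ω f`, the Poincaré inequality with constant `C_P` holds on `T`, and
`√C_P · H · k < 1`, then `‖∇u‖_{L²(ω)} ≤ C_e √C_P H ‖f‖_{L²(ω)}` with
`C_e = (1 - C_P (Hk)²)⁻¹`. -/
theorem mean_zero_local_energy_estimate (d : ℕ) (ω : Set (EuclideanSpace ℝ (Fin d)))
    (H k CP : ℝ) (hH : 0 < H) (hk : 0 < k) (hCP : 0 < CP)
    (hres : Real.sqrt CP * H * k < 1)
    (T : Set ((EuclideanSpace ℝ (Fin d) → ℝ) ×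
      (EuclideanSpace ℝ (Fin d) → EuclideanSpace ℝ (Fin d))))
    (u : EuclideanSpace ℝ (Fin d) → ℝ)
    (gu : EuclideanSpace ℝ (Fin d) → EuclideanSpace ℝ (Fin d))
    (f : EuclideanSpace ℝ (Fin d) → ℝ)
    (huT : (u, gu) ∈ T)
    (hPoincare : ∀ p ∈ T,
      Real.sqrt (∫ x in ω, (p.1 x) ^ 2) ≤
        Real.sqrt CP * H * Real.sqrt (∫ x in ω, ‖p.2 x‖ ^ 2))
    (hweak : ∀ p ∈ T,
      (∫ x in ω, ⟪gu x, p.2 x⟫) - k ^ 2 * ∫ x in ω, u x * p.1 x =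
        ∫ x in ω, (f x - (volume ω).toReal⁻¹ * ∫ y in ω, f y) * p.1 x)
    (hf : Integrable (fun x => (f x) ^ 2) (volume.restrict ω))
    (hf1 : Integrable f (volume.restrict ω))
    (hu : Integrable (fun x => (u x) ^ 2) (volume.restrict ω))
    (hgu : Integrable (fun x => ‖gu x‖ ^ 2) (volume.restrict ω)) :
    Real.sqrt (∫ x in ω, ‖gu x‖ ^ 2) ≤
      (1 - CP * (H * k) ^ 2)⁻¹ * Real.sqrt CP * H * Real.sqrt (∫ x in ω, (f x) ^ 2) := by
  classical
  set c : ℝ := (volume ω).toReal⁻¹ * ∫ y in ω, f y with hc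
  set A : ℝ := ∫ x in ω, ‖gu x‖ ^ 2 with hA
  set B : ℝ := ∫ x in ω, (u x) ^ 2 with hB
  set F2 : ℝ := ∫ x in ω, (f x) ^ 2 with hF2
  have hA0 : 0 ≤ A := integral_nonneg fun x => sq_nonneg _
  have hB0 : 0 ≤ B := integral_nonneg fun x => sq_nonneg _
  have hF0 : 0 ≤ F2 := integral_nonneg fun x => sq_nonneg _
  -- The mean-subtracted source has smaller L² norm
  have hmean : Integrable (fun x => (f x - c) ^ 2) (volume.restrict ω) ∧
      (∫ x in ω, (f x - c) ^ 2) ≤ F2 := by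
    rcases eq_top_or_lt_top (volume ω) with htop | hfin
    · have hc0 : c = 0 := by simp [hc, htop]
      constructor
      · simpa [hc0] using hf
      · simp [hc0, hF2]
    · haveI : IsFiniteMeasure (volume.restrict ω) :=
        ⟨by rwa [Measure.restrict_apply_univ]⟩
      have hexp : (fun x => (f x - c) ^ 2)
          = fun x => ((f x) ^ 2 - 2 * c * f x) + c ^ 2 := by
        funext x; ring
      have i1 : Integrable (fun x => (f x) ^ 2 - 2 * c * f x) (volume.restrict ω) :=
        hf.sub (hf1.const_mul (2 * c))
      refine ⟨by rw [hexp]; exact i1.add (integrable_const _), ?_⟩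
      have e1 : (∫ x in ω, (((f x) ^ 2 - 2 * c * f x) + c ^ 2))
          = (∫ x in ω, ((f x) ^ 2 - 2 * c * f x)) + ∫ _x in ω, (c ^ 2 : ℝ) :=
        integral_add i1 (integrable_const _)
      have e2 : (∫ x in ω, ((f x) ^ 2 - 2 * c * f x))
          = F2 - ∫ x in ω, 2 * c * f x := integral_sub hf (hf1.const_mul (2 * c))
      have e3 : (∫ x in ω, 2 * c * f x) = 2 * c * ∫ x in ω, f x :=
        integral_const_mul _ _
      have e4 : (∫ _x in ω, (c ^ 2 : ℝ)) = (volume ω).toReal * c ^ 2 := by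
        rw [setIntegral_const, smul_eq_mul]; rfl
      have hQeq : (∫ x in ω, (f x - c) ^ 2)
          = F2 - 2 * c * (∫ x in ω, f x) + c ^ 2 * (volume ω).toReal := by
        rw [hexp, e1, e2, e3, e4]; ring
      rw [hQeq]
      by_cases hm : (volume ω).toReal = 0
      · have hc0 : c = 0 := by simp [hc, hm]
        simp [hc0, hm]
      · have hfc : (∫ x in ω, f x) = c * (volume ω).toReal := by
          rw [hc]; field_simp
        rw [hfc]
        have hm0 : 0 ≤ (volume ω).toReal := ENNReal.toReal_nonneg
        nlinarith [sq_nonneg c]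
  obtain ⟨hQint, hQle⟩ := hmean
  set Q : ℝ := ∫ x in ω, (f x - c) ^ 2 with hQ
  have hQ0 : 0 ≤ Q := integral_nonneg fun x => sq_nonneg _
  -- Poincaré for u
  have hP := hPoincare (u, gu) huT
  simp only at hP
  have h4 : Real.sqrt CP * Real.sqrt CP = CP := Real.mul_self_sqrt hCP.le
  -- squared Poincaré : B ≤ CP * H² * A
  have hBle : B ≤ CP * H ^ 2 * A := by
    have h1 : Real.sqrt B * Real.sqrt B ≤
        (Real.sqrt CP * H * Real.sqrt A) * (Real.sqrt CP * H * Real.sqrt A) :=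
      mul_self_le_mul_self (Real.sqrt_nonneg _) hP
    have h2 : Real.sqrt B * Real.sqrt B = B := Real.mul_self_sqrt hB0
    have h3 : Real.sqrt A * Real.sqrt A = A := Real.mul_self_sqrt hA0
    have hx : (Real.sqrt CP * H * Real.sqrt A) * (Real.sqrt CP * H * Real.sqrt A)
        = CP * H ^ 2 * A := by
      linear_combination H ^ 2 * Real.sqrt A * Real.sqrt A * h4 + CP * H ^ 2 * h3
    linarith [h1, h2, hx]
  -- resolvent condition squared
  have hθ : 0 < 1 - CP * (H * k) ^ 2 := by
    have h0 : 0 ≤ Real.sqrt CP * H * k :=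
      mul_nonneg (mul_nonneg (Real.sqrt_nonneg _) hH.le) hk.le
    have h1 : (Real.sqrt CP * H * k) * (Real.sqrt CP * H * k) < 1 * 1 :=
      mul_lt_mul'' hres hres h0 h0
    have hx : (Real.sqrt CP * H * k) * (Real.sqrt CP * H * k) = CP * (H * k) ^ 2 := by
      linear_combination H ^ 2 * k ^ 2 * h4
    linarith [h1, hx]
  set θ : ℝ := 1 - CP * (H * k) ^ 2 with hθdef
  set t : ℝ := CP * H ^ 2 with htdef
  have ht : 0 < t := by positivity
  obtain ⟨ε, hε, hεθ⟩ : ∃ ε : ℝ, 0 < ε ∧ ε * θ = t :=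
    ⟨t / θ, div_pos ht hθ, by field_simp⟩
  -- the weak formulation tested with (u, gu)
  have hw := hweak (u, gu) huT
  simp only [real_inner_self_eq_norm_sq] at hw
  have hmul : (∫ x in ω, u x * u x) = B := by
    rw [hB]; congr 1; funext x; ring
  rw [hmul, ← hA] at hw
  clear_value c A B F2 Q θ t
  -- Young's inequality pointwise bound
  have key0 : ∀ a b : ℝ, a * b ≤ ε / 2 * a ^ 2 + 1 / (2 * ε) * b ^ 2 := by
    intro a b
    have heq : ε / 2 * a ^ 2 + 1 / (2 * ε) * b ^ 2 - a * b
        = (ε * a - b) ^ 2 / (2 * ε) := by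
      field_simp
      ring
    have hnn : 0 ≤ (ε * a - b) ^ 2 / (2 * ε) :=
      div_nonneg (sq_nonneg _) (by positivity)
    linarith [heq ▸ hnn]
  have key : ∀ a b : ℝ, |a * b| ≤ ε / 2 * a ^ 2 + 1 / (2 * ε) * b ^ 2 := by
    intro a b
    rw [abs_mul, ← sq_abs a, ← sq_abs b]
    exact key0 |a| |b|
  -- bound the right-hand side of the weak form
  have hbound : A - k ^ 2 * B ≤ ε / 2 * Q + 1 / (2 * ε) * B := by
    rw [hw]
    have e5 : (∫ x in ω, (ε / 2 * (f x - c) ^ 2 + 1 / (2 * ε) * (u x) ^ 2))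
        = (∫ x in ω, ε / 2 * (f x - c) ^ 2) + ∫ x in ω, 1 / (2 * ε) * (u x) ^ 2 :=
      integral_add (hQint.const_mul (ε / 2)) (hu.const_mul (1 / (2 * ε)))
    have e6 : (∫ x in ω, ε / 2 * (f x - c) ^ 2) = ε / 2 * Q := by
      rw [integral_const_mul, ← hQ]
    have e7 : (∫ x in ω, 1 / (2 * ε) * (u x) ^ 2) = 1 / (2 * ε) * B := by
      rw [integral_const_mul, ← hB]
    calc (∫ x in ω, (f x - c) * u x)
        ≤ ‖∫ x in ω, (f x - c) * u x‖ := le_abs_self _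
      _ ≤ ∫ x in ω, ‖(f x - c) * u x‖ := norm_integral_le_integral_norm _
      _ ≤ ∫ x in ω, (ε / 2 * (f x - c) ^ 2 + 1 / (2 * ε) * (u x) ^ 2) := by
          refine integral_mono_of_nonneg (Filter.Eventually.of_forall fun x => norm_nonneg _)
            ((hQint.const_mul (ε / 2)).add (hu.const_mul (1 / (2 * ε))))
            (Filter.Eventually.of_forall fun x => ?_)
          simpa [Real.norm_eq_abs, abs_mul] using key (f x - c) (u x)
      _ = ε / 2 * Q + 1 / (2 * ε) * B := by rw [e5, e6, e7]
  -- combine everything: θ² A ≤ t F2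
  have htk : t * k ^ 2 = 1 - θ := by rw [htdef, hθdef]; ring
  have hfinal : θ ^ 2 * A ≤ t * F2 := by
    have h1 : k ^ 2 * B ≤ (1 - θ) * A := by
      calc k ^ 2 * B ≤ k ^ 2 * (t * A) :=
            mul_le_mul_of_nonneg_left hBle (sq_nonneg k)
        _ = t * k ^ 2 * A := by ring
        _ = (1 - θ) * A := by rw [htk]
    have h2 : ε / 2 * Q ≤ ε / 2 * F2 :=
      mul_le_mul_of_nonneg_left hQle (by positivity)
    have h3 : 1 / (2 * ε) * B ≤ θ / 2 * A := by
      calc 1 / (2 * ε) * B ≤ 1 / (2 * ε) * (t * A) :=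
            mul_le_mul_of_nonneg_left hBle (by positivity)
        _ = 1 / (2 * ε) * (ε * θ * A) := by rw [hεθ]
        _ = θ / 2 * A := by field_simp
    have hA5 : θ / 2 * A ≤ ε / 2 * F2 := by linarith [hbound, h1, h2, h3]
    have h6 : θ * (θ * A) ≤ θ * (ε * F2) :=
      mul_le_mul_of_nonneg_left (by linarith) hθ.le
    calc θ ^ 2 * A = θ * (θ * A) := by ring
      _ ≤ θ * (ε * F2) := h6
      _ = ε * θ * F2 := by ring
      _ = t * F2 := by rw [hεθ]
  -- conclude by taking square roots
  have hAle : A ≤ (θ⁻¹ * Real.sqrt CP * H) ^ 2 * F2 := by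
    have hsq : (θ⁻¹ * Real.sqrt CP * H) ^ 2 * F2 = t * F2 / θ ^ 2 := by
      rw [mul_pow, mul_pow, Real.sq_sqrt hCP.le, htdef]
      field_simp
    rw [hsq, le_div_iff₀ (pow_pos hθ 2)]
    linarith [hfinal]
  calc Real.sqrt A ≤ Real.sqrt ((θ⁻¹ * Real.sqrt CP * H) ^ 2 * F2) :=
        Real.sqrt_le_sqrt hAle
    _ = (θ⁻¹ * Real.sqrt CP * H) * Real.sqrt F2 := by
        rw [Real.sqrt_mul (sq_nonneg _), Real.sqrt_sq (by positivity)]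
    _ = θ⁻¹ * Real.sqrt CP * H * Real.sqrt F2 := by ring
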